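/- Let V be a finite-dimensional real vector space, Π : V* → V antisymmetric, and W ⊆ V a subspace satisfying the pointwise Poisson–Dirac condition Π(W⁰) ∩ W = {0}. Then there exists a unique linear map Π̂ : W* → W such that for every ξ ∈ V* with Π(ξ) ∈ W one has Π̂(ξ|_W) = Π(ξ), where ξ|_W ∈ W* is the restriction of ξ to W. Moreover Π̂ is antisymmetric: α(Π̂ β) = −β(Π̂ α) for all α, β ∈ W*. -/

import Mathlib

/-- Let `V` be a finite-dimensional real vector space, `P : V* → V`
antisymmetric, and `W ⊆ V` a subspace satisfying the pointwise Poisson–Dirac condition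
`P(W⁰) ∩ W = {0}`. Then there exists a unique linear map `Phat : W* → W` such that for
every `ξ ∈ V*` with `P ξ ∈ W` one has `Phat (ξ|_W) = P ξ`; moreover `Phat` is
antisymmetric. -/
theorem stmt_5 (V : Type*) [AddCommGroup V] [Module ℝ V] [FiniteDimensional ℝ V]
    (P : Module.Dual ℝ V →ₗ[ℝ] V)
    (hanti : ∀ ξ η : Module.Dual ℝ V, ξ (P η) = - η (P ξ))
    (W : Submodule ℝ V)
    (hPD : Submodule.map P W.dualAnnihilator ⊓ W = ⊥) :
    ∃ Phat : Module.Dual ℝ W →ₗ[ℝ] W,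
      (∀ (ξ : Module.Dual ℝ V) (h : P ξ ∈ W), Phat (ξ ∘ₗ W.subtype) = ⟨P ξ, h⟩) ∧
      (∀ α β : Module.Dual ℝ W, α (Phat β) = - β (Phat α)) ∧
      (∀ Phat' : Module.Dual ℝ W →ₗ[ℝ] W,
        (∀ (ξ : Module.Dual ℝ V) (h : P ξ ∈ W), Phat' (ξ ∘ₗ W.subtype) = ⟨P ξ, h⟩) →
        Phat' = Phat) := by
  classical
  set S : Submodule ℝ (Module.Dual ℝ V) := Submodule.comap P W with hS
  -- S is the annihilator of P(W⁰)
  have hSann : S = (W.dualAnnihilator.map P).dualAnnihilator := by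
    ext ξ
    simp only [hS, Submodule.mem_comap, Submodule.mem_dualAnnihilator]
    constructor
    · rintro h v ⟨η, hη, rfl⟩
      rw [SetLike.mem_coe, Submodule.mem_dualAnnihilator] at hη
      rw [hanti ξ η]
      simp [hη _ h]
    · intro h
      rw [← Subspace.forall_mem_dualAnnihilator_apply_eq_zero_iff W (P ξ)]
      intro φ hφ
      have := h (P φ) ⟨φ, hφ, rfl⟩
      rw [hanti ξ φ] at this
      linarith
  have hsup : S ⊔ W.dualAnnihilator = ⊤ := by
    rw [hSann, ← Subspace.dualAnnihilator_inf_eq, hPD, Submodule.dualAnnihilator_bot]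
  -- the restriction map from S to Dual W is surjective
  set r' : S →ₗ[ℝ] Module.Dual ℝ W := W.dualRestrict ∘ₗ S.subtype with hr'
  have hrange : LinearMap.range r' = ⊤ := by
    have h1 : LinearMap.range r' = Submodule.map W.dualRestrict S := by
      rw [hr', LinearMap.range_comp, Submodule.range_subtype]
    have h2 : Submodule.map W.dualRestrict W.dualAnnihilator = ⊥ := by
      rw [eq_bot_iff]
      rintro x ⟨η, hη, rfl⟩
      have : η ∈ LinearMap.ker W.dualRestrict := W.dualRestrict_ker_eq_dualAnnihilator ▸ hη
      simpa using this
    rw [h1, ← sup_bot_eq (Submodule.map W.dualRestrict S), ← h2, ← Submodule.map_sup, hsup,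
      Submodule.map_top, LinearMap.range_eq_top.mpr (Subspace.dualRestrict_surjective (W := W))]
  obtain ⟨g, hg⟩ := r'.exists_rightInverse_of_surjective hrange
  set f : S →ₗ[ℝ] W := (P ∘ₗ S.subtype).codRestrict W (fun σ => σ.2) with hf
  have hkey : ∀ (ξ : Module.Dual ℝ V) (h : P ξ ∈ W), (f ∘ₗ g) (ξ ∘ₗ W.subtype) = ⟨P ξ, h⟩ := by
    intro ξ h
    have hgr : r' (g (ξ ∘ₗ W.subtype)) = ξ ∘ₗ W.subtype := by
      rw [← LinearMap.comp_apply, hg]; rfl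
    set σ := g (ξ ∘ₗ W.subtype) with hσ
    have hmem : (σ : Module.Dual ℝ V) - ξ ∈ W.dualAnnihilator := by
      rw [← W.dualRestrict_ker_eq_dualAnnihilator, LinearMap.mem_ker, map_sub]
      have : W.dualRestrict (σ : Module.Dual ℝ V) = ξ ∘ₗ W.subtype := hgr
      rw [this]
      ext w
      simp [Submodule.dualRestrict_apply]
    have hzero : P ((σ : Module.Dual ℝ V) - ξ) = 0 := by
      have h1 : P ((σ : Module.Dual ℝ V) - ξ) ∈ Submodule.map P W.dualAnnihilator ⊓ W := by
        refine ⟨⟨_, hmem, rfl⟩, ?_⟩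
        rw [map_sub]
        exact sub_mem σ.2 h
      rw [hPD] at h1
      exact h1
    have hP : P (σ : Module.Dual ℝ V) = P ξ := by
      rw [map_sub, sub_eq_zero] at hzero; exact hzero
    ext
    simp [f, hP]
    exact hP
  refine ⟨f ∘ₗ g, hkey, ?_, ?_⟩
  · -- antisymmetry
    intro α β
    have hα : W.dualRestrict ((g α : Module.Dual ℝ V)) = α := by
      have := congrArg (fun t => t α) hg; exact this
    have hβ : W.dualRestrict ((g β : Module.Dual ℝ V)) = β := by
      have := congrArg (fun t => t β) hg; exact this
    have e1 : α ((f ∘ₗ g) β) = (g α : Module.Dual ℝ V) (P (g β : Module.Dual ℝ V)) := by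
      rw [← hα]
      simp [f, Submodule.dualRestrict_apply]
      rw [hα]
      rfl
    have e2 : β ((f ∘ₗ g) α) = (g β : Module.Dual ℝ V) (P (g α : Module.Dual ℝ V)) := by
      rw [← hβ]
      simp [f, Submodule.dualRestrict_apply]
      rw [hβ]
      rfl
    rw [e1, e2, hanti]
  · -- uniqueness
    intro Phat' hP'
    ext α
    obtain ⟨σ, hσ⟩ : ∃ σ : S, r' σ = α := by
      have := hrange ▸ Submodule.mem_top (x := α)
      exact this
    have hσ' : ((σ : Module.Dual ℝ V) ∘ₗ W.subtype) = α := by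
      rw [← hσ]; rfl
    rw [← hσ', hP' _ σ.2, hkey _ σ.2]
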